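/- Let 0 < β < 1, s ≤ t, q ≥ 0, and h ∈ L¹([s,t]) nonnegative. If v : [s,t] → ℝ₊ is absolutely continuous, v(s) ≤ q, and v'(r) ≤ -h(r)·v(r)^β for almost every r ∈ [s,t], then for all r ∈ [s,t] one has v(r) ≤ (max(q^(1-β) - (1-β)·∫_s^r h(τ)dτ, 0))^(1/(1-β)). -/

import Mathlib

open MeasureTheory intervalIntegral Set

/-- Concavity (Bernoulli) inequality: for `0 ≤ x ≤ A`, `A > 0`, `0 ≤ p ≤ 1`,
`x ^ p ≤ A ^ p - p * A ^ (p - 1) * (A - x)`. -/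
lemma rpow_le_sub_of_le {A x p : ℝ} (hA : 0 < A) (hx : 0 ≤ x) (hxA : x ≤ A)
    (hp0 : 0 ≤ p) (hp1 : p ≤ 1) :
    x ^ p ≤ A ^ p - p * A ^ (p - 1) * (A - x) := by
  have hdivA : (0:ℝ) ≤ x / A := div_nonneg hx hA.le
  have hber : (1 + (x / A - 1)) ^ p ≤ 1 + p * (x / A - 1) :=
    rpow_one_add_le_one_add_mul_self (by linarith) hp0 hp1
  have h1 : (x / A) ^ p ≤ 1 + p * (x / A - 1) := by
    simpa using hber
  have h2 : (x / A) ^ p = x ^ p / A ^ p := Real.div_rpow hx hA.le p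
  have hAp : 0 < A ^ p := Real.rpow_pos_of_pos hA p
  have h3 : x ^ p ≤ (1 + p * (x / A - 1)) * A ^ p := by
    rw [h2] at h1
    calc x ^ p = x ^ p / A ^ p * A ^ p := by field_simp
    _ ≤ (1 + p * (x / A - 1)) * A ^ p := mul_le_mul_of_nonneg_right h1 hAp.le
  have h4 : A ^ (p - 1) = A ^ p / A := Real.rpow_sub_one hA.ne' p
  calc x ^ p ≤ (1 + p * (x / A - 1)) * A ^ p := h3
  _ = A ^ p - p * (A ^ p / A) * (A - x) := by field_simp; ring
  _ = A ^ p - p * A ^ (p - 1) * (A - x) := by rw [h4]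

/-- Comparison lemma for subsolutions of the singular ODE `y' = -h(r) y^β`. -/
theorem comparison_lemma
    (β s t q : ℝ) (hβ : 0 < β) (hβ1 : β < 1) (hst : s ≤ t) (hq : 0 ≤ q)
    (h v v' : ℝ → ℝ)
    (hh_int : IntervalIntegrable h volume s t)
    (hh_nonneg : ∀ r ∈ Icc s t, 0 ≤ h r)
    (hv_nonneg : ∀ r ∈ Icc s t, 0 ≤ v r)
    (hv'_int : IntervalIntegrable v' volume s t)
    (hAC : ∀ r ∈ Icc s t, v r = v s + ∫ τ in s..r, v' τ)
    (hsub : ∀ᵐ r ∂(volume.restrict (Icc s t)), v' r ≤ - h r * (v r) ^ β)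
    (hv0 : v s ≤ q) :
    ∀ r ∈ Icc s t,
      v r ≤ (max (q ^ (1 - β) - (1 - β) * ∫ τ in s..r, h τ) 0) ^ (1 / (1 - β)) := by
  set p : ℝ := 1 - β with hpdef
  have hp : 0 < p := by simp only [hpdef]; linarith
  have hsmem : s ∈ Icc s t := ⟨le_rfl, hst⟩
  -- integrability on subintervals
  have hhsubI : ∀ a b : ℝ, a ∈ Icc s t → b ∈ Icc s t → IntervalIntegrable h volume a b :=
    fun a b ha hb => hh_int.mono_set
      (uIcc_subset_uIcc (by rw [uIcc_of_le hst]; exact ha) (by rw [uIcc_of_le hst]; exact hb))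
  have hv'subI : ∀ a b : ℝ, a ∈ Icc s t → b ∈ Icc s t → IntervalIntegrable v' volume a b :=
    fun a b ha hb => hv'_int.mono_set
      (uIcc_subset_uIcc (by rw [uIcc_of_le hst]; exact ha) (by rw [uIcc_of_le hst]; exact hb))
  -- difference formula
  have hdiff : ∀ a b : ℝ, a ∈ Icc s t → b ∈ Icc s t →
      v b - v a = ∫ τ in a..b, v' τ := by
    intro a b ha hb
    have hadd : (∫ τ in s..a, v' τ) + ∫ τ in a..b, v' τ = ∫ τ in s..b, v' τ :=
      integral_add_adjacent_intervals (hv'subI s a hsmem ha) (hv'subI a b ha hb)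
    rw [hAC a ha, hAC b hb]
    linarith
  -- a.e. restriction to subintervals
  have hsub' : ∀ a b : ℝ, a ∈ Icc s t → b ∈ Icc s t →
      ∀ᵐ τ ∂(volume.restrict (Icc a b)), v' τ ≤ - h τ * (v τ) ^ β := by
    intro a b ha hb
    exact ae_restrict_of_ae_restrict_of_subset (Icc_subset_Icc ha.1 hb.2) hsub
  -- monotonicity of v
  have hmono : ∀ a b : ℝ, a ∈ Icc s t → b ∈ Icc s t → a ≤ b → v b ≤ v a := by
    intro a b ha hb hab
    have hle : (∫ τ in a..b, v' τ) ≤ ∫ τ in a..b, (0:ℝ) := by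
      apply integral_mono_ae_restrict hab (hv'subI a b ha hb) intervalIntegrable_const
      filter_upwards [hsub' a b ha hb, ae_restrict_mem measurableSet_Icc] with τ h1 h2
      have hτ : τ ∈ Icc s t := ⟨ha.1.trans h2.1, h2.2.trans hb.2⟩
      nlinarith [hh_nonneg τ hτ, Real.rpow_nonneg (hv_nonneg τ hτ) β]
    have := hdiff a b ha hb
    simp only [intervalIntegral.integral_zero] at hle
    linarith
  -- continuity of v
  have hvcont : ContinuousOn v (Icc s t) := by
    have h1 : ContinuousOn (fun x => v s + ∫ τ in s..x, v' τ) (Icc s t) := by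
      apply continuousOn_const.add
      have := continuousOn_primitive_interval' hv'_int
        (by rw [uIcc_of_le hst]; exact hsmem)
      rwa [uIcc_of_le hst] at this
    exact h1.congr fun x hx => hAC x hx
  -- continuity of the primitive of h
  have hprim : ContinuousOn (fun x => ∫ τ in s..x, h τ) (Icc s t) := by
    have := continuousOn_primitive_interval' hh_int (by rw [uIcc_of_le hst]; exact hsmem)
    rwa [uIcc_of_le hst] at this
  intro r hr
  rcases (hv_nonneg r hr).eq_or_lt with hvr | hvr
  · rw [← hvr]
    exact Real.rpow_nonneg (le_max_right _ _) _
  -- main case : v r > 0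
  have hIge : 0 ≤ ∫ τ in s..r, h τ :=
    intervalIntegral.integral_nonneg hr.1 fun u hu => hh_nonneg u ⟨hu.1, hu.2.trans hr.2⟩
  have key2 : ∀ ε : ℝ, 0 < ε → ε < 1 →
      v r ^ p ≤ v s ^ p - (1 - ε) * (p * ∫ τ in s..r, h τ) := by
    intro ε hε0 hε1
    set κ : ℝ := (1 - ε) ^ (1/β) with hκdef
    have hε1' : (0:ℝ) < 1 - ε := by linarith
    have hκ0 : 0 < κ := Real.rpow_pos_of_pos hε1' _
    have hκ1 : κ < 1 := Real.rpow_lt_one hε1'.le (by linarith) (by positivity)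
    have hκβ : κ ^ β = 1 - ε := by
      rw [hκdef, ← Real.rpow_mul hε1'.le, one_div_mul_cancel hβ.ne', Real.rpow_one]
    set S : Set ℝ :=
      {x ∈ Icc s r | v x ^ p ≤ v s ^ p - (1 - ε) * (p * ∫ τ in s..x, h τ)} with hSdef
    have hsS : s ∈ S := by
      constructor
      · exact ⟨le_rfl, hr.1⟩
      · simp
    have hSne : S.Nonempty := ⟨s, hsS⟩
    have hSbdd : BddAbove S := ⟨r, fun x hx => hx.1.2⟩
    have hSclosed : IsClosed S := by
      apply isClosed_Icc.isClosed_le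
      · exact ((hvcont.mono (Icc_subset_Icc le_rfl hr.2)).rpow_const
          fun x hx => Or.inr hp.le)
      · exact continuousOn_const.sub (continuousOn_const.mul
          (continuousOn_const.mul (hprim.mono (Icc_subset_Icc le_rfl hr.2))))
    set c : ℝ := sSup S with hcdef
    have hcS : c ∈ S := hSclosed.csSup_mem hSne hSbdd
    have hcIcc : c ∈ Icc s r := hcS.1
    have hcst : c ∈ Icc s t := ⟨hcIcc.1, hcIcc.2.trans hr.2⟩
    have hcr : c = r := by
      by_contra hne
      have hclt : c < r := lt_of_le_of_ne hcIcc.2 hne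
      have hvc : 0 < v c := lt_of_lt_of_le hvr (hmono c r hcst hr hcIcc.2)
      have hη : 0 < (1 - κ) * v c := by nlinarith
      obtain ⟨δ, hδ0, hδ⟩ := (Metric.continuousWithinAt_iff).1 (hvcont c hcst)
        ((1 - κ) * v c) hη
      set b₀ : ℝ := min (c + δ/2) r with hb₀def
      have hcb₀ : c < b₀ := by
        apply lt_min (by linarith) hclt
      have hb₀r : b₀ ≤ r := min_le_right _ _
      have hb₀st : b₀ ∈ Icc s t := ⟨hcst.1.trans hcb₀.le, hb₀r.trans hr.2⟩
      -- lower bound for v on [c, b₀]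
      have hvlb : ∀ τ ∈ Icc c b₀, κ * v c ≤ v τ := by
        intro τ hτ
        have hτst : τ ∈ Icc s t := ⟨hcst.1.trans hτ.1, hτ.2.trans hb₀st.2⟩
        have hdist : dist τ c < δ := by
          rw [Real.dist_eq, abs_of_nonneg (by linarith [hτ.1])]
          have : τ ≤ c + δ/2 := hτ.2.trans (min_le_left _ _)
          linarith
        have := hδ hτst hdist
        rw [Real.dist_eq, abs_lt] at this
        nlinarith [this.1]
      -- integral comparison on [c, b₀]
      have hint1 : (∫ τ in c..b₀, v' τ) ≤ ∫ τ in c..b₀, -((1 - ε) * v c ^ β) * h τ := by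
        apply integral_mono_ae_restrict hcb₀.le (hv'subI c b₀ hcst hb₀st)
          (IntervalIntegrable.const_mul (hhsubI c b₀ hcst hb₀st) _)
        filter_upwards [hsub' c b₀ hcst hb₀st, ae_restrict_mem measurableSet_Icc]
          with τ h1 h2
        have hτst : τ ∈ Icc s t := ⟨hcst.1.trans h2.1, h2.2.trans hb₀st.2⟩
        have h3 : κ * v c ≤ v τ := hvlb τ h2
        have h4 : (κ * v c) ^ β ≤ v τ ^ β :=
          Real.rpow_le_rpow (by positivity) h3 hβ.le
        have h5 : (κ * v c) ^ β = (1 - ε) * v c ^ β := by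
          rw [Real.mul_rpow hκ0.le (hv_nonneg c hcst), hκβ]
        rw [h5] at h4
        nlinarith [mul_le_mul_of_nonneg_left h4 (hh_nonneg τ hτst)]
      have hH : 0 ≤ ∫ τ in c..b₀, h τ :=
        intervalIntegral.integral_nonneg hcb₀.le
          fun u hu => hh_nonneg u ⟨hcst.1.trans hu.1, hu.2.trans hb₀st.2⟩
      have hconst : (∫ τ in c..b₀, -((1 - ε) * v c ^ β) * h τ)
          = -((1 - ε) * v c ^ β) * ∫ τ in c..b₀, h τ :=
        intervalIntegral.integral_const_mul _ _
      have hvb₀ : v b₀ - v c = ∫ τ in c..b₀, v' τ := hdiff c b₀ hcst hb₀st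
      have hstep : v b₀ ≤ v c - (1 - ε) * v c ^ β * ∫ τ in c..b₀, h τ := by
        rw [hconst] at hint1
        linarith
      -- Bernoulli step
      have hber := rpow_le_sub_of_le (A := v c) (x := v b₀) hvc (hv_nonneg b₀ hb₀st)
        (hmono c b₀ hcst hb₀st hcb₀.le) hp.le (by simp only [hpdef]; linarith)
      have h6 : (1 - ε) * v c ^ β * ∫ τ in c..b₀, h τ ≤ v c - v b₀ := by linarith
      have h7 : p * v c ^ (p - 1) * ((1 - ε) * v c ^ β * ∫ τ in c..b₀, h τ)
          ≤ p * v c ^ (p - 1) * (v c - v b₀) := by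
        apply mul_le_mul_of_nonneg_left h6
        positivity
      have h8 : v c ^ (p - 1) * v c ^ β = 1 := by
        rw [← Real.rpow_add hvc]
        have : p - 1 + β = 0 := by simp only [hpdef]; ring
        rw [this, Real.rpow_zero]
      have h9 : p * v c ^ (p - 1) * ((1 - ε) * v c ^ β * ∫ τ in c..b₀, h τ)
          = (1 - ε) * (p * ∫ τ in c..b₀, h τ) := by
        linear_combination (p * (1 - ε) * (∫ τ in c..b₀, h τ)) * h8
      have h10 : v b₀ ^ p ≤ v c ^ p - (1 - ε) * (p * ∫ τ in c..b₀, h τ) := by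
        rw [← h9]; linarith
      have hadd : (∫ τ in s..c, h τ) + ∫ τ in c..b₀, h τ = ∫ τ in s..b₀, h τ :=
        integral_add_adjacent_intervals (hhsubI s c hsmem hcst) (hhsubI c b₀ hcst hb₀st)
      have hb₀S : b₀ ∈ S := by
        refine ⟨⟨hcst.1.trans hcb₀.le, hb₀r⟩, ?_⟩
        have := hcS.2
        rw [← hadd]
        ring_nf
        ring_nf at this h10
        linarith
      have : b₀ ≤ c := le_csSup hSbdd hb₀S
      linarith
    rw [hcr] at hcS
    exact hcS.2
  -- pass to the limit ε → 0
  have hkey : v r ^ p ≤ v s ^ p - p * ∫ τ in s..r, h τ := by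
    have : ∀ ε' > (0:ℝ), v r ^ p ≤ (v s ^ p - p * ∫ τ in s..r, h τ) + ε' := by
      intro ε' hε'
      set I : ℝ := ∫ τ in s..r, h τ with hIdef
      set ε : ℝ := min (1/2) (ε' / (p * I + 1)) with hεdef
      have hpI : 0 ≤ p * I := by positivity
      have hε0 : 0 < ε := lt_min (by norm_num) (by positivity)
      have hε1 : ε < 1 := lt_of_le_of_lt (min_le_left _ _) (by norm_num)
      have h1 := key2 ε hε0 hε1
      have h2 : ε * (p * I) ≤ ε' := by
        have h3 : ε ≤ ε' / (p * I + 1) := min_le_right _ _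
        have h4 : ε * (p * I) ≤ (ε' / (p * I + 1)) * (p * I) :=
          mul_le_mul_of_nonneg_right h3 hpI
        have h5 : (ε' / (p * I + 1)) * (p * I) ≤ ε' := by
          rw [div_mul_eq_mul_div, div_le_iff₀ (by positivity)]
          nlinarith
        exact le_trans h4 h5
      nlinarith
    have := le_of_forall_pos_le_add this
    linarith [this]
  have hq' : v s ^ p ≤ q ^ p := Real.rpow_le_rpow (hv_nonneg s hsmem) hv0 hp.le
  have hmax : v r ^ p ≤ max (q ^ p - p * ∫ τ in s..r, h τ) 0 :=
    le_max_iff.2 (Or.inl (by linarith))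
  have hid : (v r ^ p) ^ (1/p) = v r := by
    rw [← Real.rpow_mul (hv_nonneg r hr), mul_one_div_cancel hp.ne', Real.rpow_one]
  calc v r = (v r ^ p) ^ (1/p) := hid.symm
  _ ≤ (max (q ^ p - p * ∫ τ in s..r, h τ) 0) ^ (1/p) :=
      Real.rpow_le_rpow (Real.rpow_nonneg (hv_nonneg r hr) p) hmax (by positivity)
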